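/- arXiv:2003.07987 — 6 statements merged into one kernel-verified Lean document; each statement's English description precedes it below -/
import Mathlib

section
/- Maximum principle: if V is nonnegative and not identically zero on M = (Z/KZ)^d, and f ∈ ℓ²(M) satisfies (Hf)_n ≥ 0 for all n ∈ M, then f_n ≥ 0 for all n ∈ M. -/
open Finset Real

noncomputable section

/-- The `i`-th standard basis vector in the discrete torus `(ZMod K)^d`. -/
def e (d K : ℕ) (i : Fin d) : Fin d → ZMod K :=
  fun j => if j = i then 1 else 0

/-- The periodic discrete Schrödinger operator `H = -Δ + V` on `(ZMod K)^d`: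
`(Hφ)_n = -∑_{|m-n|₁=1}(φ_m - φ_n) + v_n φ_n`. -/
def opH (d K : ℕ) (v φ : (Fin d → ZMod K) → ℝ) (n : Fin d → ZMod K) : ℝ :=
  (∑ i : Fin d, (2 * φ n - φ (n + e d K i) - φ (n - e d K i))) + v n * φ n

/-- Maximum principle: if `V ≥ 0` is not identically zero and `(Hf)_n ≥ 0`
for all `n`, then `f_n ≥ 0` for all `n`. -/
theorem maximum_principle (d K : ℕ) [NeZero K] (v : (Fin d → ZMod K) → ℝ)
    (hv : ∀ n, 0 ≤ v n) (hv0 : ∃ n, v n ≠ 0)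
    (f : (Fin d → ZMod K) → ℝ) (hf : ∀ n, 0 ≤ opH d K v f n) :
    ∀ n, 0 ≤ f n := by
  by_contra h
  push_neg at h
  obtain ⟨n0, hn0⟩ := h
  obtain ⟨m, -, hm⟩ := Finset.exists_min_image Finset.univ f ⟨n0, Finset.mem_univ n0⟩
  have hmin : ∀ n, f m ≤ f n := fun n => hm n (Finset.mem_univ _)
  have hmlt : f m < 0 := lt_of_le_of_lt (hmin n0) hn0
  -- Key step: if f attains the minimum at n, it attains it at n + e i.
  have key : ∀ n : Fin d → ZMod K, f n = f m → ∀ i, f (n + e d K i) = f m := by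
    intro n hn i
    have hH := hf n
    rw [opH, hn] at hH
    have hterm : ∀ j ∈ Finset.univ,
        (2 * f m - f (n + e d K j) - f (n - e d K j)) ≤ 0 := by
      intro j _
      have h1 := hmin (n + e d K j)
      have h2 := hmin (n - e d K j)
      linarith
    have hv' : v n * f m ≤ 0 := mul_nonpos_of_nonneg_of_nonpos (hv n) hmlt.le
    have hsum : ∑ j : Fin d, (2 * f m - f (n + e d K j) - f (n - e d K j)) ≤ 0 :=
      Finset.sum_nonpos hterm
    have hsum0 : ∑ j : Fin d, (2 * f m - f (n + e d K j) - f (n - e d K j)) = 0 :=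
      le_antisymm hsum (by linarith)
    have heach := (Finset.sum_eq_zero_iff_of_nonpos hterm).mp hsum0 i (Finset.mem_univ i)
    have h1 := hmin (n + e d K i)
    have h2 := hmin (n - e d K i)
    linarith
  -- f equals f m on every point reachable from m by adding basis vectors
  have main : ∀ N : ℕ, ∀ c : Fin d → ℕ, (∑ j, c j) = N →
      f (m + ∑ j, c j • e d K j) = f m := by
    intro N
    induction N with
    | zero =>
      intro c hc
      have hc0 : ∀ j ∈ Finset.univ, c j = 0 := by
        intro j hj
        exact (Finset.sum_eq_zero_iff.mp hc) j hj
      have : ∀ j, c j = 0 := fun j => hc0 j (Finset.mem_univ j)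
      simp [this]
    | succ N ih =>
      intro c hc
      have hex : ∃ j0, c j0 ≠ 0 := by
        by_contra hall
        push_neg at hall
        simp [hall] at hc
      obtain ⟨j0, hj0⟩ := hex
      set c' := Function.update c j0 (c j0 - 1) with hc'
      have hsplit : ∑ j, c j = c j0 + ∑ j ∈ Finset.univ.erase j0, c j :=
        (Finset.add_sum_erase _ _ (Finset.mem_univ j0)).symm
      have hsum' : ∑ j, c' j = N := by
        rw [hc', Finset.sum_update_of_mem (Finset.mem_univ j0),
          Finset.sdiff_singleton_eq_erase]
        omega
      have hrepr : (∑ j, c j • e d K j) = (∑ j, c' j • e d K j) + e d K j0 := by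
        rw [← Finset.add_sum_erase _ (fun j => c j • e d K j) (Finset.mem_univ j0),
          ← Finset.add_sum_erase _ (fun j => c' j • e d K j) (Finset.mem_univ j0)]
        have h1 : c' j0 = c j0 - 1 := Function.update_self _ _ _
        have h2 : ∀ j ∈ Finset.univ.erase j0, c' j • e d K j = c j • e d K j := by
          intro j hj
          rw [hc', Function.update_of_ne (Finset.ne_of_mem_erase hj)]
        rw [Finset.sum_congr rfl h2, h1]
        have h3 : c j0 = (c j0 - 1) + 1 := by omega
        have h4 : c j0 • e d K j0 = (c j0 - 1) • e d K j0 + e d K j0 := by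
          nth_rewrite 1 [h3]
          rw [add_nsmul, one_nsmul]
        rw [h4]
        abel
      rw [hrepr, ← add_assoc]
      exact key _ (ih c' hsum') j0
  -- every point is reachable: f is constant equal to f m
  have hconst : ∀ n : Fin d → ZMod K, f n = f m := by
    intro n
    have hrep : m + ∑ j, ((n j - m j).val) • e d K j = n := by
      funext i
      have : (∑ j, ((n j - m j).val) • e d K j) i
          = ∑ j, ((n j - m j).val) • (e d K j i) := by
        rw [Finset.sum_apply]
        simp only [Pi.smul_apply]
      show m i + (∑ j, ((n j - m j).val) • e d K j) i = n i
      rw [this]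
      have hsum : ∑ j, ((n j - m j).val) • (e d K j i) = ((n i - m i).val : ZMod K) := by
        rw [Finset.sum_eq_single i]
        · simp [e]
        · intro b _ hb
          simp [e, hb.symm]
        · intro hi; exact absurd (Finset.mem_univ i) hi
      rw [hsum, ZMod.natCast_rightInverse (n i - m i)]
      ring
    rw [← hrep]
    exact main _ _ rfl
  obtain ⟨p, hp⟩ := hv0
  have hvp : 0 < v p := lt_of_le_of_ne (hv p) (Ne.symm hp)
  have hfp := hf p
  rw [opH] at hfp
  simp only [hconst] at hfp
  simp only [show 2 * f m - f m - f m = 0 from by ring, Finset.sum_const_zero,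
    zero_add] at hfp
  nlinarith [mul_neg_of_pos_of_neg hvp hmlt]
end
end

section
/- If 0 ≤ v_n ≤ V_max for all n with V not identically zero, and u solves (Hu)_n = 1 on M = (Z/KZ)^d, then u_n ≥ 1/V_max for all n ∈ M; in particular u is strictly positive. -/
open Finset Real

noncomputable section

/-- If `0 ≤ v_n ≤ V_max`, `v` not identically zero, and `Hu = 1`, then
`u_n ≥ 1/V_max > 0` for all `n`. -/
theorem landscape_lower_bound (d K : ℕ) [NeZero K] (Vmax : ℝ) (hVmax : 0 < Vmax)
    (v : (Fin d → ZMod K) → ℝ) (hv : ∀ n, 0 ≤ v n ∧ v n ≤ Vmax)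
    (hv0 : ∃ n, v n ≠ 0)
    (u : (Fin d → ZMod K) → ℝ) (hu : ∀ n, opH d K v u n = 1) :
    ∀ n, 1 / Vmax ≤ u n := by
  obtain ⟨m, hm⟩ := Finite.exists_min u
  have hsum : (∑ i : Fin d, (2 * u m - u (m + e d K i) - u (m - e d K i))) ≤ 0 := by
    apply Finset.sum_nonpos
    intro i _
    have h1 := hm (m + e d K i)
    have h2 := hm (m - e d K i)
    linarith
  have hum := hu m
  unfold opH at hum
  have hvu : 1 ≤ v m * u m := by linarith
  have hvm := hv m
  have hvpos : 0 < v m := by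
    rcases lt_or_eq_of_le hvm.1 with h | h
    · exact h
    · exfalso; rw [← h] at hvu; simp at hvu; linarith
  have hupos : 0 < u m := by nlinarith
  have key : 1 / Vmax ≤ u m := by
    rw [div_le_iff₀ hVmax]
    calc 1 ≤ v m * u m := hvu
    _ ≤ Vmax * u m := by nlinarith [hvm.2]
    _ = u m * Vmax := mul_comm _ _
  intro n
  exact le_trans key (hm n)
end
end

section
/- Landscape uncertainty principle: let u solve (Hu)_n = 1 on M = (Z/KZ)^d. Then for all f, g ∈ ℓ²(M), ⟨g, Hf⟩ = Σ_{n∈M} Σ_{i=1}^d u_{n+e_i} u_n (g_{n+e_i}/u_{n+e_i} - g_n/u_n)(f_{n+e_i}/u_{n+e_i} - f_n/u_n) + Σ_{n∈M} (1/u_n) g_n f_n. -/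
open Finset Real

noncomputable section

lemma sum_shift {d K : ℕ} [NeZero K] (φ : (Fin d → ZMod K) → ℝ) (c : Fin d → ZMod K) :
    ∑ n : Fin d → ZMod K, φ (n + c) = ∑ n : Fin d → ZMod K, φ n :=
  Fintype.sum_equiv (Equiv.addRight c) _ _ (fun _ => rfl)

/-- Landscape uncertainty principle: if `Hu = 1` with `u > 0`, then for all
`f, g`, `⟨g, Hf⟩` equals the conjugated form with effective potential `1/u`. -/
theorem landscape_uncertainty (d K : ℕ) [NeZero K] (v : (Fin d → ZMod K) → ℝ)
    (hv : ∀ n, 0 ≤ v n) (hv0 : ∃ n, v n ≠ 0)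
    (u : (Fin d → ZMod K) → ℝ) (hupos : ∀ n, 0 < u n)
    (hu : ∀ n, opH d K v u n = 1)
    (f g : (Fin d → ZMod K) → ℝ) :
    ∑ n : Fin d → ZMod K, g n * opH d K v f n =
      (∑ n : Fin d → ZMod K, ∑ i : Fin d,
        u (n + e d K i) * u n *
          (g (n + e d K i) / u (n + e d K i) - g n / u n) *
          (f (n + e d K i) / u (n + e d K i) - f n / u n)) +
      ∑ n : Fin d → ZMod K, (1 / u n) * (g n * f n) := by
  have hne : ∀ n, u n ≠ 0 := fun n => (hupos n).ne'
  -- Step 1: summation by parts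
  have step1 : ∑ n : Fin d → ZMod K, g n * opH d K v f n
      = (∑ n : Fin d → ZMod K, ∑ i : Fin d,
          (g (n + e d K i) - g n) * (f (n + e d K i) - f n))
        + ∑ n : Fin d → ZMod K, v n * (g n * f n) := by
    unfold opH
    have expand : ∀ n : Fin d → ZMod K,
        g n * ((∑ i : Fin d, (2 * f n - f (n + e d K i) - f (n - e d K i))) + v n * f n)
        = (∑ i : Fin d, g n * (2 * f n - f (n + e d K i) - f (n - e d K i)))
          + v n * (g n * f n) := by
      intro n
      rw [mul_add, Finset.mul_sum]
      congr 1
      ring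
    rw [Finset.sum_congr rfl (fun n _ => expand n), Finset.sum_add_distrib]
    congr 1
    rw [Finset.sum_comm]
    conv_rhs => rw [Finset.sum_comm]
    apply Finset.sum_congr rfl
    intro i _
    set c := e d K i with hc
    have h1 : ∑ n : Fin d → ZMod K, g (n + c) * f (n + c)
        = ∑ n : Fin d → ZMod K, g n * f n := sum_shift (fun n => g n * f n) c
    have h2 : ∑ n : Fin d → ZMod K, g (n + c) * f n
        = ∑ n : Fin d → ZMod K, g n * f (n - c) := by
      have := sum_shift (fun n => g n * f (n - c)) c
      simpa using this
    have eL : ∑ n : Fin d → ZMod K, g n * (2 * f n - f (n + c) - f (n - c))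
        = 2 * (∑ n : Fin d → ZMod K, g n * f n)
          - (∑ n : Fin d → ZMod K, g n * f (n + c))
          - (∑ n : Fin d → ZMod K, g n * f (n - c)) := by
      have : ∑ n : Fin d → ZMod K, g n * (2 * f n - f (n + c) - f (n - c))
          = ∑ n : Fin d → ZMod K, (2 * (g n * f n) - g n * f (n + c) - g n * f (n - c)) :=
        Finset.sum_congr rfl (fun n _ => by ring)
      rw [this, Finset.sum_sub_distrib, Finset.sum_sub_distrib, ← Finset.mul_sum]
    have eR : ∑ n : Fin d → ZMod K, (g (n + c) - g n) * (f (n + c) - f n)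
        = (∑ n : Fin d → ZMod K, g (n + c) * f (n + c))
          - (∑ n : Fin d → ZMod K, g (n + c) * f n)
          - (∑ n : Fin d → ZMod K, g n * f (n + c))
          + ∑ n : Fin d → ZMod K, g n * f n := by
      have : ∑ n : Fin d → ZMod K, (g (n + c) - g n) * (f (n + c) - f n)
          = ∑ n : Fin d → ZMod K,
              (g (n + c) * f (n + c) - g (n + c) * f n - g n * f (n + c) + g n * f n) :=
        Finset.sum_congr rfl (fun n _ => by ring)
      rw [this, Finset.sum_add_distrib, Finset.sum_sub_distrib, Finset.sum_sub_distrib]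
    rw [eL, eR, h1, h2]
    ring
  -- Step 2: pointwise landscape identity
  have key : ∀ (n : Fin d → ZMod K) (i : Fin d),
      (g (n + e d K i) - g n) * (f (n + e d K i) - f n)
      = u (n + e d K i) * u n *
          (g (n + e d K i) / u (n + e d K i) - g n / u n) *
          (f (n + e d K i) / u (n + e d K i) - f n / u n)
        + u (n + e d K i) * (u (n + e d K i) - u n) *
            (g (n + e d K i) / u (n + e d K i)) * (f (n + e d K i) / u (n + e d K i))
        - u n * (u (n + e d K i) - u n) * (g n / u n) * (f n / u n) := by
    intro n i
    have ha := hne (n + e d K i)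
    have hb := hne n
    field_simp
    ring
  -- Step 3: sum of correction terms
  have step3 : ∑ n : Fin d → ZMod K, ∑ i : Fin d,
        (u (n + e d K i) * (u (n + e d K i) - u n) *
            (g (n + e d K i) / u (n + e d K i)) * (f (n + e d K i) / u (n + e d K i))
          - u n * (u (n + e d K i) - u n) * (g n / u n) * (f n / u n))
      = ∑ n : Fin d → ZMod K, (g n * f n / u n - v n * (g n * f n)) := by
    rw [Finset.sum_comm]
    have hEq : ∀ i : Fin d, ∑ n : Fin d → ZMod K,
        (u (n + e d K i) * (u (n + e d K i) - u n) *
            (g (n + e d K i) / u (n + e d K i)) * (f (n + e d K i) / u (n + e d K i))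
          - u n * (u (n + e d K i) - u n) * (g n / u n) * (f n / u n))
        = ∑ n : Fin d → ZMod K,
          (u n * (u n - u (n - e d K i)) * (g n / u n) * (f n / u n)
            - u n * (u (n + e d K i) - u n) * (g n / u n) * (f n / u n)) := by
      intro i
      rw [Finset.sum_sub_distrib, Finset.sum_sub_distrib]
      congr 1
      have := sum_shift (fun n => u n * (u n - u (n - e d K i)) * (g n / u n) * (f n / u n))
        (e d K i)
      simpa using this
    rw [Finset.sum_congr rfl (fun i _ => hEq i), Finset.sum_comm]
    apply Finset.sum_congr rfl
    intro n _
    have hco : ∑ i : Fin d,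
        (u n * (u n - u (n - e d K i)) * (g n / u n) * (f n / u n)
          - u n * (u (n + e d K i) - u n) * (g n / u n) * (f n / u n))
        = (∑ i : Fin d, (2 * u n - u (n + e d K i) - u (n - e d K i)))
            * (u n * (g n / u n) * (f n / u n)) := by
      rw [Finset.sum_mul]
      apply Finset.sum_congr rfl
      intros; ring
    have hsum : ∑ i : Fin d, (2 * u n - u (n + e d K i) - u (n - e d K i))
        = 1 - v n * u n := by
      have := hu n
      unfold opH at this
      linarith
    rw [hco, hsum]
    have hb := hne n
    field_simp
  calc ∑ n : Fin d → ZMod K, g n * opH d K v f n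
      = (∑ n : Fin d → ZMod K, ∑ i : Fin d,
          (g (n + e d K i) - g n) * (f (n + e d K i) - f n))
        + ∑ n : Fin d → ZMod K, v n * (g n * f n) := step1
    _ = ((∑ n : Fin d → ZMod K, ∑ i : Fin d,
          u (n + e d K i) * u n *
            (g (n + e d K i) / u (n + e d K i) - g n / u n) *
            (f (n + e d K i) / u (n + e d K i) - f n / u n))
        + ∑ n : Fin d → ZMod K, ∑ i : Fin d,
            (u (n + e d K i) * (u (n + e d K i) - u n) *
                (g (n + e d K i) / u (n + e d K i)) * (f (n + e d K i) / u (n + e d K i))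
              - u n * (u (n + e d K i) - u n) * (g n / u n) * (f n / u n)))
        + ∑ n : Fin d → ZMod K, v n * (g n * f n) := by
        congr 1
        rw [← Finset.sum_add_distrib]
        apply Finset.sum_congr rfl
        intro n _
        rw [← Finset.sum_add_distrib]
        apply Finset.sum_congr rfl
        intro i _
        rw [key n i]
        ring
    _ = _ := by
        rw [step3, add_assoc]
        congr 1
        rw [← Finset.sum_add_distrib]
        apply Finset.sum_congr rfl
        intro n _
        ring
end
end

section
/- Effective potential lower bound: if u solves (Hu)_n = 1 on M = (Z/KZ)^d, then for every f ∈ ℓ²(M), ⟨f, Hf⟩ ≥ Σ_{n∈M} f_n² / u_n. In particular, every eigenvalue μ of H satisfies μ ≥ min_{n∈M} (1/u_n). -/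
open Finset Real

noncomputable section

section Aux

variable {d K : ℕ} [NeZero K]

private lemma shift_sum (c : Fin d → ZMod K) (F : (Fin d → ZMod K) → ℝ) :
    ∑ n : Fin d → ZMod K, F (n - c) = ∑ n : Fin d → ZMod K, F n :=
  Fintype.sum_bijective (fun n => n - c) (Equiv.subRight c).bijective _ _ (fun _ => rfl)

private lemma expand_sum (v h g : (Fin d → ZMod K) → ℝ) :
    ∑ n : Fin d → ZMod K, g n * opH d K v h n
      = (∑ i : Fin d, ∑ n : Fin d → ZMod K,
          g n * (2 * h n - h (n + e d K i) - h (n - e d K i)))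
        + ∑ n : Fin d → ZMod K, v n * (g n * h n) := by
  unfold opH
  simp only [mul_add, Finset.mul_sum]
  rw [Finset.sum_add_distrib, Finset.sum_comm]
  congr 1
  exact Finset.sum_congr rfl fun n _ => by ring

end Aux

/-- Effective potential lower bound: `⟨f, Hf⟩ ≥ ∑ f_n²/u_n`; in particular
every eigenvalue `μ` of `H` satisfies `μ ≥ min_n (1/u_n)`. -/
theorem effective_potential_bound (d K : ℕ) [NeZero K]
    (v : (Fin d → ZMod K) → ℝ) (hv : ∀ n, 0 ≤ v n) (hv0 : ∃ n, v n ≠ 0)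
    (u : (Fin d → ZMod K) → ℝ) (hupos : ∀ n, 0 < u n)
    (hu : ∀ n, opH d K v u n = 1) :
    (∀ f : (Fin d → ZMod K) → ℝ,
        ∑ n : Fin d → ZMod K, (f n) ^ 2 / u n ≤
          ∑ n : Fin d → ZMod K, f n * opH d K v f n) ∧
      (∀ (μ : ℝ) (φ : (Fin d → ZMod K) → ℝ), φ ≠ 0 →
        (∀ n, opH d K v φ n = μ * φ n) →
        (Finset.univ.inf' Finset.univ_nonempty fun n : Fin d → ZMod K => 1 / u n)
          ≤ μ) := by
  have key : ∀ f : (Fin d → ZMod K) → ℝ,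
      ∑ n : Fin d → ZMod K, (f n) ^ 2 / u n ≤
        ∑ n : Fin d → ZMod K, f n * opH d K v f n := by
    intro f
    have hL : ∑ n : Fin d → ZMod K, (f n) ^ 2 / u n
        = (∑ i : Fin d, ∑ n : Fin d → ZMod K,
            (f n) ^ 2 / u n * (2 * u n - u (n + e d K i) - u (n - e d K i)))
          + ∑ n : Fin d → ZMod K, v n * (f n) ^ 2 := by
      have h1 : ∑ n : Fin d → ZMod K, (f n) ^ 2 / u n
          = ∑ n : Fin d → ZMod K, ((f n) ^ 2 / u n) * opH d K v u n := by
        refine Finset.sum_congr rfl fun n _ => ?_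
        rw [hu n, mul_one]
      rw [h1, expand_sum]
      congr 1
      refine Finset.sum_congr rfl fun n _ => ?_
      field_simp [(hupos n).ne']
    have hR : ∑ n : Fin d → ZMod K, f n * opH d K v f n
        = (∑ i : Fin d, ∑ n : Fin d → ZMod K,
            f n * (2 * f n - f (n + e d K i) - f (n - e d K i)))
          + ∑ n : Fin d → ZMod K, v n * (f n) ^ 2 := by
      rw [expand_sum]
      congr 1
      exact Finset.sum_congr rfl fun n _ => by ring
    rw [hL, hR]
    refine add_le_add (Finset.sum_le_sum fun i _ => ?_) le_rfl
    set c := e d K i with hc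
    have s1 : ∑ n : Fin d → ZMod K, (f n) ^ 2 / u n * (2 * u n - u (n + c) - u (n - c))
        = ∑ n : Fin d → ZMod K,
            ((f n) ^ 2 / u n * (2 * u n - u (n + c)) - (f (n + c)) ^ 2 / u (n + c) * u n) := by
      have hs := shift_sum c (fun m => (f (m + c)) ^ 2 / u (m + c) * u m)
      simp only [sub_add_cancel] at hs
      calc ∑ n : Fin d → ZMod K, (f n) ^ 2 / u n * (2 * u n - u (n + c) - u (n - c))
          = ∑ n : Fin d → ZMod K,
              ((f n) ^ 2 / u n * (2 * u n - u (n + c)) - (f n) ^ 2 / u n * u (n - c)) :=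
            Finset.sum_congr rfl fun n _ => by ring
        _ = (∑ n : Fin d → ZMod K, (f n) ^ 2 / u n * (2 * u n - u (n + c)))
            - ∑ n : Fin d → ZMod K, (f n) ^ 2 / u n * u (n - c) := Finset.sum_sub_distrib _ _
        _ = (∑ n : Fin d → ZMod K, (f n) ^ 2 / u n * (2 * u n - u (n + c)))
            - ∑ n : Fin d → ZMod K, (f (n + c)) ^ 2 / u (n + c) * u n := by rw [hs]
        _ = _ := (Finset.sum_sub_distrib _ _).symm
    have s2 : ∑ n : Fin d → ZMod K, f n * (2 * f n - f (n + c) - f (n - c))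
        = ∑ n : Fin d → ZMod K, (f n * (2 * f n - f (n + c)) - f (n + c) * f n) := by
      have hs := shift_sum c (fun m => f (m + c) * f m)
      simp only [sub_add_cancel] at hs
      calc ∑ n : Fin d → ZMod K, f n * (2 * f n - f (n + c) - f (n - c))
          = ∑ n : Fin d → ZMod K, (f n * (2 * f n - f (n + c)) - f n * f (n - c)) :=
            Finset.sum_congr rfl fun n _ => by ring
        _ = (∑ n : Fin d → ZMod K, f n * (2 * f n - f (n + c)))
            - ∑ n : Fin d → ZMod K, f n * f (n - c) := Finset.sum_sub_distrib _ _
        _ = (∑ n : Fin d → ZMod K, f n * (2 * f n - f (n + c)))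
            - ∑ n : Fin d → ZMod K, f (n + c) * f n := by rw [hs]
        _ = _ := (Finset.sum_sub_distrib _ _).symm
    rw [s1, s2]
    refine Finset.sum_le_sum fun n _ => ?_
    have ha := hupos n
    have hb := hupos (n + c)
    rw [div_mul_eq_mul_div, div_mul_eq_mul_div,
      div_sub_div _ _ ha.ne' hb.ne', div_le_iff₀ (by positivity)]
    nlinarith [sq_nonneg (f n * u (n + c) - f (n + c) * u n), mul_pos ha hb]
  refine ⟨key, fun μ φ hφ hφeig => ?_⟩
  set m := (Finset.univ.inf' Finset.univ_nonempty fun n : Fin d → ZMod K => 1 / u n) with hm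
  have hS : 0 < ∑ n : Fin d → ZMod K, (φ n) ^ 2 := by
    obtain ⟨n0, hn0⟩ : ∃ n, φ n ≠ 0 := by
      by_contra h
      push_neg at h
      exact hφ (funext h)
    exact Finset.sum_pos' (fun n _ => sq_nonneg _)
      ⟨n0, Finset.mem_univ _, by positivity⟩
  have h1 : m * ∑ n : Fin d → ZMod K, (φ n) ^ 2 ≤ ∑ n : Fin d → ZMod K, (φ n) ^ 2 / u n := by
    rw [Finset.mul_sum]
    refine Finset.sum_le_sum fun n _ => ?_
    rw [div_eq_mul_inv, mul_comm ((φ n)^2) (u n)⁻¹, ← one_div]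
    exact mul_le_mul_of_nonneg_right (Finset.inf'_le _ (Finset.mem_univ n)) (sq_nonneg _)
  have h2 : ∑ n : Fin d → ZMod K, φ n * opH d K v φ n
      = μ * ∑ n : Fin d → ZMod K, (φ n) ^ 2 := by
    rw [Finset.mul_sum]
    exact Finset.sum_congr rfl fun n _ => by rw [hφeig n]; ring
  have := (key φ).trans_eq h2
  exact le_of_mul_le_mul_right (h1.trans this) hS
end
end

section
/- Agmon decay estimate: let Hφ = μφ on ℓ²((Z/KZ)^d) with K ≥ 3, 0 ≤ v_n ≤ V_max, δ > 0 and 0 < μ ≤ V_max - δ. Let h_n be the Agmon distance to J_δ(μ) = {n : 1/u_n ≤ μ+δ} for the landscape function u. Then there is an absolute constant C > 0 such that for all 0 < α < 1/√(Cd), Σ_{h_n ≥ 1} e^{2αh_n} φ_n² ≤ (C_0/δ) Σ_{n∈M} φ_n², where C_0 = (4e^{2α}d + (2+6Cα²)e^{2α} d V_max)/(1 - Cdα²). -/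
attribute [local instance] Classical.propDecidable

open Finset Real

noncomputable section

/-- `m` and `n` are nearest neighbors on the torus: `|m - n|₁ = 1`. -/
def adj (d K : ℕ) (m n : Fin d → ZMod K) : Prop :=
  ∃ i : Fin d, m = n + e d K i ∨ m = n - e d K i

/-- The Agmon (semi-)metric associated to a weight `w`:
`ρ(n,m) = inf over unit-step paths γ from n to m of
  ∑_j ln(1 + √(min{w(γ_j), w(γ_{j+1})}))`. -/
def rho (d K : ℕ) (w : (Fin d → ZMod K) → ℝ) (n m : Fin d → ZMod K) : ℝ :=
  sInf {s : ℝ | ∃ (k : ℕ) (γ : ℕ → Fin d → ZMod K),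
    γ 0 = n ∧ γ k = m ∧ (∀ j < k, adj d K (γ (j + 1)) (γ j)) ∧
    s = ∑ j ∈ Finset.range k,
      Real.log (1 + Real.sqrt (min (w (γ j)) (w (γ (j + 1)))))}

/-- The Agmon distance to a region `J`: `h_n = inf_{m ∈ J} ρ(n, m)`. -/
def agmonDist (d K : ℕ) (w : (Fin d → ZMod K) → ℝ)
    (J : Set (Fin d → ZMod K)) (n : Fin d → ZMod K) : ℝ :=
  sInf {s : ℝ | ∃ m ∈ J, s = rho d K w n m}

namespace AgmonAux

variable {d K : ℕ} [NeZero K]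

lemma sum_shift (c : Fin d → ZMod K) (f : (Fin d → ZMod K) → ℝ) :
    ∑ n, f (n + c) = ∑ n, f n :=
  Fintype.sum_equiv (Equiv.addRight c) _ _ (fun _ => rfl)

lemma lap_i (f g : (Fin d → ZMod K) → ℝ) (i : Fin d) :
    ∑ n, (2 * f n - f (n + e d K i) - f (n - e d K i)) * g n
      = ∑ n, (f (n + e d K i) - f n) * (g (n + e d K i) - g n) := by
  have h1 : ∑ n, f n * g (n + e d K i) = ∑ n, f (n - e d K i) * g n := by
    have := sum_shift (e d K i) (fun m => f (m - e d K i) * g m)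
    simpa using this
  have h2 : ∑ n, f (n + e d K i) * g (n + e d K i) = ∑ n, f n * g n :=
    sum_shift (e d K i) (fun m => f m * g m)
  have expand : ∀ n, (2 * f n - f (n + e d K i) - f (n - e d K i)) * g n
      = 2 * (f n * g n) - f (n + e d K i) * g n - f (n - e d K i) * g n := by
    intro n; ring
  have expand2 : ∀ n, (f (n + e d K i) - f n) * (g (n + e d K i) - g n)
      = f (n + e d K i) * g (n + e d K i) - f (n + e d K i) * g n
        - f n * g (n + e d K i) + f n * g n := by
    intro n; ring
  rw [Finset.sum_congr rfl (fun n _ => expand n),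
      Finset.sum_congr rfl (fun n _ => expand2 n)]
  simp only [Finset.sum_sub_distrib, Finset.sum_add_distrib, ← Finset.mul_sum]
  rw [h1, h2]
  ring

lemma quad (v f g : (Fin d → ZMod K) → ℝ) :
    ∑ n, opH d K v f n * g n
      = (∑ n, ∑ i, (f (n + e d K i) - f n) * (g (n + e d K i) - g n))
        + ∑ n, v n * f n * g n := by
  have : ∀ n, opH d K v f n * g n
      = (∑ i, (2 * f n - f (n + e d K i) - f (n - e d K i)) * g n) + v n * f n * g n := by
    intro n; rw [opH, add_mul, Finset.sum_mul]; try ring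
  rw [Finset.sum_congr rfl (fun n _ => this n), Finset.sum_add_distrib]
  congr 1
  rw [Finset.sum_comm]
  rw [Finset.sum_congr rfl (fun i _ => lap_i f g i), Finset.sum_comm]

end AgmonAux

namespace AgmonAux2
open Finset Real
variable {d K : ℕ} [NeZero K]

lemma edgeCost_nonneg (w : (Fin d → ZMod K) → ℝ) (a b : Fin d → ZMod K) :
    0 ≤ Real.log (1 + Real.sqrt (min (w a) (w b))) :=
  Real.log_nonneg (by nlinarith [Real.sqrt_nonneg (min (w a) (w b))])

def pathSet (w : (Fin d → ZMod K) → ℝ) (n m : Fin d → ZMod K) : Set ℝ :=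
  {s : ℝ | ∃ (k : ℕ) (γ : ℕ → Fin d → ZMod K),
    γ 0 = n ∧ γ k = m ∧ (∀ j < k, adj d K (γ (j + 1)) (γ j)) ∧
    s = ∑ j ∈ Finset.range k,
      Real.log (1 + Real.sqrt (min (w (γ j)) (w (γ (j + 1)))))}

lemma rho_eq (w : (Fin d → ZMod K) → ℝ) (n m : Fin d → ZMod K) :
    rho d K w n m = sInf (pathSet w n m) := rfl

lemma pathSet_nonneg {w : (Fin d → ZMod K) → ℝ} {n m : Fin d → ZMod K} :
    ∀ s ∈ pathSet w n m, (0:ℝ) ≤ s := by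
  rintro s ⟨k, γ, -, -, -, rfl⟩
  exact Finset.sum_nonneg fun j _ => edgeCost_nonneg w _ _

lemma pathSet_bddBelow {w : (Fin d → ZMod K) → ℝ} {n m : Fin d → ZMod K} :
    BddBelow (pathSet w n m) := ⟨0, fun s hs => pathSet_nonneg s hs⟩

lemma rho_nonneg (w : (Fin d → ZMod K) → ℝ) (n m : Fin d → ZMod K) :
    0 ≤ rho d K w n m :=
  Real.sInf_nonneg fun s hs => pathSet_nonneg s hs

lemma rho_self (w : (Fin d → ZMod K) → ℝ) (n : Fin d → ZMod K) :
    rho d K w n n = 0 := by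
  refine le_antisymm ?_ (rho_nonneg w n n)
  refine csInf_le pathSet_bddBelow ?_
  exact ⟨0, fun _ => n, rfl, rfl, by omega, by simp⟩

/-- reachability -/
def Reach (m m' : Fin d → ZMod K) : Prop :=
  ∃ (k : ℕ) (γ : ℕ → Fin d → ZMod K),
    γ 0 = m ∧ γ k = m' ∧ ∀ j < k, adj d K (γ (j + 1)) (γ j)

lemma reach_refl (m : Fin d → ZMod K) : Reach m m :=
  ⟨0, fun _ => m, rfl, rfl, by omega⟩

lemma reach_step {m m' m'' : Fin d → ZMod K} (h : Reach m m')
    (ha : adj d K m'' m') : Reach m m'' := by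
  obtain ⟨k, γ, h0, hk, hadj⟩ := h
  refine ⟨k + 1, fun j => if j = k + 1 then m'' else γ j, ?_, by simp, ?_⟩
  · simp [h0]
  · intro j hj
    dsimp only
    rcases Nat.lt_or_ge j k with hjk | hjk
    · rw [if_neg (by omega : j + 1 ≠ k + 1), if_neg (by omega : j ≠ k + 1)]
      exact hadj j hjk
    · have hj' : j = k := by omega
      subst hj'
      rw [if_pos rfl, if_neg (by omega : j ≠ j + 1), hk]
      exact ha

lemma reach_add_e {m m' : Fin d → ZMod K} (i : Fin d) (h : Reach m m') :
    Reach m (m' + e d K i) :=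
  reach_step h ⟨i, Or.inl rfl⟩

lemma reach_nsmul {m m' : Fin d → ZMod K} (i : Fin d) (a : ℕ) (h : Reach m m') :
    Reach m (m' + a • e d K i) := by
  induction a with
  | zero => simpa using h
  | succ a ih =>
      have : m' + (a + 1) • e d K i = (m' + a • e d K i) + e d K i := by
        rw [succ_nsmul]; abel
      rw [this]
      exact reach_add_e i ih

lemma reach_all (m m' : Fin d → ZMod K) : Reach m m' := by
  have key : ∀ s : Finset (Fin d), Reach m (m + ∑ i ∈ s, ((m' - m) i) • e d K i) := by
    intro s
    induction s using Finset.induction_on with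
    | empty => simpa using reach_refl m
    | insert _ _ hnotmem ih =>
        rename_i a s'
        rw [Finset.sum_insert hnotmem]
        have hc : ((m' - m) a) • e d K a = (((m' - m) a).val) • e d K a := by
          have h1 : (((((m' - m) a).val : ℕ)) : ZMod K) = (m' - m) a :=
            ZMod.natCast_rightInverse ((m' - m) a)
          conv_lhs => rw [← h1]
          rw [Nat.cast_smul_eq_nsmul]
        have : m + (((m' - m) a) • e d K a + ∑ i ∈ s', ((m' - m) i) • e d K i)
            = (m + ∑ i ∈ s', ((m' - m) i) • e d K i) + (((m' - m) a).val) • e d K a := by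
          rw [← hc]; abel
        rw [this]
        exact reach_nsmul a _ ih
  have hsum : m + ∑ i : Fin d, ((m' - m) i) • e d K i = m' := by
    funext j
    have : (∑ i : Fin d, ((m' - m) i) • e d K i) j
        = ∑ i : Fin d, ((m' - m) i) * (if j = i then 1 else 0) := by
      rw [Finset.sum_apply]; rfl
    simp only [Pi.add_apply, this, mul_ite, mul_one, mul_zero]
    rw [Finset.sum_ite_eq (Finset.univ : Finset (Fin d)) j (fun i => (m' - m) i)]
    simp
  have := key Finset.univ
  rwa [hsum] at this

lemma pathSet_nonempty (w : (Fin d → ZMod K) → ℝ) (n m : Fin d → ZMod K) :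
    (pathSet w n m).Nonempty := by
  obtain ⟨k, γ, h0, hk, hadj⟩ := reach_all (d := d) (K := K) n m
  exact ⟨_, k, γ, h0, hk, hadj, rfl⟩

lemma agmonDist_nonneg (w : (Fin d → ZMod K) → ℝ) (J : Set (Fin d → ZMod K))
    (n : Fin d → ZMod K) : 0 ≤ agmonDist d K w J n :=
  Real.sInf_nonneg (by rintro s ⟨m, -, rfl⟩; exact rho_nonneg w n m)

lemma agmonDist_eq_zero {w : (Fin d → ZMod K) → ℝ} {J : Set (Fin d → ZMod K)}
    {n : Fin d → ZMod K} (hn : n ∈ J) : agmonDist d K w J n = 0 := by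
  refine le_antisymm ?_ (agmonDist_nonneg w J n)
  have : rho d K w n n ∈ {s : ℝ | ∃ m ∈ J, s = rho d K w n m} := ⟨n, hn, rfl⟩
  have h := csInf_le ⟨0, by rintro s ⟨m, -, rfl⟩; exact rho_nonneg w n m⟩ this
  rwa [rho_self] at h

/-- one-step Lipschitz bound for the Agmon distance -/
lemma agmonDist_lip {w : (Fin d → ZMod K) → ℝ} {J : Set (Fin d → ZMod K)}
    {n m : Fin d → ZMod K} (ha : adj d K m n) :
    agmonDist d K w J n ≤ agmonDist d K w J m
      + Real.log (1 + Real.sqrt (min (w n) (w m))) := by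
  set L := Real.log (1 + Real.sqrt (min (w n) (w m))) with hL
  rcases Set.eq_empty_or_nonempty J with hJ | ⟨m0, hm0⟩
  · have hn0 : agmonDist d K w J n = 0 := by
      unfold agmonDist; rw [hJ]; simp [Real.sInf_empty]
    have hm0' : agmonDist d K w J m = 0 := by
      unfold agmonDist; rw [hJ]; simp [Real.sInf_empty]
    rw [hn0, hm0', zero_add]
    exact edgeCost_nonneg w n m
  · -- step 1: ρ n m' ≤ L + ρ m m' for every m'
    have step1 : ∀ m' : Fin d → ZMod K, rho d K w n m' ≤ L + rho d K w m m' := by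
      intro m'
      have hlb : ∀ s ∈ pathSet w m m', rho d K w n m' - L ≤ s := by
        rintro s ⟨k, γ, h0, hk, hadj, rfl⟩
        have hmem : L + ∑ j ∈ Finset.range k,
            Real.log (1 + Real.sqrt (min (w (γ j)) (w (γ (j + 1)))))
              ∈ pathSet w n m' := by
          refine ⟨k + 1, fun j => if j = 0 then n else γ (j - 1), by simp, ?_, ?_, ?_⟩
          · show (if k + 1 = 0 then n else γ (k + 1 - 1)) = m'
            rw [if_neg (Nat.succ_ne_zero k)]; simpa using hk
          · intro j hj
            dsimp only
            rcases Nat.eq_zero_or_pos j with rfl | hjpos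
            · rw [if_neg (Nat.succ_ne_zero 0), if_pos rfl]
              simpa [h0] using ha
            · rw [if_neg (by omega : j + 1 ≠ 0), if_neg (by omega : j ≠ 0)]
              have e1 : j + 1 - 1 = (j - 1) + 1 := by omega
              rw [e1]
              exact hadj (j - 1) (by omega)
          · rw [Finset.sum_range_succ']
            dsimp only
            have hterm : ∀ j ∈ Finset.range k,
                Real.log (1 + Real.sqrt (min
                  (w (if j + 1 = 0 then n else γ (j + 1 - 1)))
                  (w (if j + 1 + 1 = 0 then n else γ (j + 1 + 1 - 1)))))
                = Real.log (1 + Real.sqrt (min (w (γ j)) (w (γ (j + 1))))) := by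
              intro j _
              rw [if_neg (by omega : j + 1 ≠ 0), if_neg (by omega : j + 1 + 1 ≠ 0)]
              norm_num
            rw [Finset.sum_congr rfl hterm]
            rw [if_pos rfl, if_neg (Nat.succ_ne_zero 0)]
            simp only [Nat.add_sub_cancel, h0]
            rw [add_comm]
        have h2 := csInf_le (pathSet_bddBelow) hmem
        have e1 : sInf (pathSet w n m') = rho d K w n m' := rfl
        linarith [h2, e1.le, e1.ge]
      have hne := pathSet_nonempty w m m'
      have h3 := le_csInf hne hlb
      have e2 : sInf (pathSet w m m') = rho d K w m m' := rfl
      linarith [h3, e2.le, e2.ge]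
    -- step 2: take inf over m' ∈ J
    have hub : ∀ s ∈ {s : ℝ | ∃ m' ∈ J, s = rho d K w m m'},
        agmonDist d K w J n - L ≤ s := by
      rintro s ⟨m', hm', rfl⟩
      have h1 : agmonDist d K w J n ≤ rho d K w n m' :=
        csInf_le ⟨0, by rintro s ⟨mm, -, rfl⟩; exact rho_nonneg w n mm⟩ ⟨m', hm', rfl⟩
      linarith [step1 m']
    have hne : {s : ℝ | ∃ m' ∈ J, s = rho d K w m m'}.Nonempty := ⟨_, m0, hm0, rfl⟩
    have h4 := le_csInf hne hub
    have e3 : sInf {s : ℝ | ∃ m' ∈ J, s = rho d K w m m'} = agmonDist d K w J m := rfl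
    linarith [h4, e3.le, e3.ge]

end AgmonAux2

namespace AgmonAux3
open Real

lemma bernoulli_exp {t α : ℝ} (ht : 0 ≤ t) (h0 : 0 ≤ α) (h1 : α ≤ 1) :
    Real.exp (α * Real.log (1 + t)) ≤ 1 + α * t := by
  have hconc := strictConcaveOn_log_Ioi.concaveOn
  have hx : (1 + t) ∈ Set.Ioi (0:ℝ) := by simp; linarith
  have hy : (1:ℝ) ∈ Set.Ioi (0:ℝ) := by simp
  have key := hconc.2 hx hy h0 (by linarith : (0:ℝ) ≤ 1 - α) (by ring)
  simp only [smul_eq_mul, Real.log_one, mul_zero, add_zero, mul_one] at key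
  have harg : α * (1 + t) + (1 - α) = 1 + α * t := by ring
  rw [harg] at key
  have hpos : (0:ℝ) < 1 + α * t := by nlinarith
  calc Real.exp (α * Real.log (1 + t)) ≤ Real.exp (Real.log (1 + α * t)) :=
        Real.exp_le_exp.2 key
    _ = 1 + α * t := Real.exp_log hpos

lemma gsIneq {a a' : ℝ} (x y : ℝ) (ha : 0 < a) (ha' : 0 < a') :
    (a' - a) * (y^2/a' - x^2/a) ≤ (y - x)^2 := by
  have key : (y - x)^2 - (a' - a) * (y^2/a' - x^2/a) = (a*y - a'*x)^2 / (a*a') := by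
    field_simp
    ring
  have h2 : 0 ≤ (a*y - a'*x)^2 / (a*a') := by positivity
  linarith [key]

lemma expDiff {α A B t : ℝ} (hA : A ≤ B) (hB : B ≤ A + Real.log (1 + Real.sqrt t))
    (ht : 0 ≤ t) (hα0 : 0 < α) (hα1 : α ≤ 1) :
    (Real.exp (α * B) - Real.exp (α * A))^2 ≤ α^2 * t * Real.exp (2 * (α * A)) := by
  have hs := Real.sqrt_nonneg t
  have h1 : Real.exp (α * B) ≤ Real.exp (α * A) * (1 + α * Real.sqrt t) := by
    have hm : α * B ≤ α * A + α * Real.log (1 + Real.sqrt t) := by nlinarith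
    calc Real.exp (α * B) ≤ Real.exp (α * A + α * Real.log (1 + Real.sqrt t)) :=
          Real.exp_le_exp.2 hm
      _ = Real.exp (α * A) * Real.exp (α * Real.log (1 + Real.sqrt t)) := Real.exp_add _ _
      _ ≤ Real.exp (α * A) * (1 + α * Real.sqrt t) := by
          have := bernoulli_exp hs hα0.le hα1
          nlinarith [Real.exp_pos (α * A)]
  have h0 : 0 ≤ Real.exp (α * B) - Real.exp (α * A) := by
    have := Real.exp_le_exp.2 (mul_le_mul_of_nonneg_left hA hα0.le)
    linarith
  have h2 : Real.exp (α * B) - Real.exp (α * A) ≤ Real.exp (α * A) * (α * Real.sqrt t) := by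
    nlinarith [Real.exp_pos (α * A)]
  have h3 : (Real.exp (α * B) - Real.exp (α * A))^2
      ≤ (Real.exp (α * A) * (α * Real.sqrt t))^2 := by nlinarith
  have h4 : (Real.exp (α * A) * (α * Real.sqrt t))^2 = α^2 * t * Real.exp (2 * (α * A)) := by
    have he : Real.exp (α * A)^2 = Real.exp (2 * (α * A)) := by
      rw [sq, ← Real.exp_add, two_mul]
    rw [mul_pow, mul_pow, Real.sq_sqrt ht, he]
    ring
  linarith [h3, h4.le, h4.ge]

end AgmonAux3

set_option maxHeartbeats 2000000

open AgmonAux AgmonAux2 AgmonAux3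

/-- Agmon decay estimate (Theorem 1.1 / 2.8): there is an absolute constant
`C > 0` such that for all `0 < α < 1/√(Cd)`, any eigenpair `(μ, φ)` of
`H = -Δ + V` on `(Z/KZ)^d` (`K ≥ 3`, `0 ≤ v ≤ V_max`) with
`0 < μ ≤ V_max - δ` satisfies
`∑_{h_n ≥ 1} e^{2αh_n} φ_n² ≤ (C₀/δ) ∑_n φ_n²`, where
`C₀ = (4e^{2α}d + (2 + 6Cα²)e^{2α} d V_max)/(1 - Cdα²)` and `h` is the Agmon
distance to `J_δ(μ) = {n : 1/u_n ≤ μ + δ}` for the landscape function `u`. -/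
theorem agmon_decay :
    ∃ C : ℝ, 0 < C ∧
      ∀ (d K : ℕ) [NeZero K], 3 ≤ K →
      ∀ (Vmax : ℝ) (v u φ : (Fin d → ZMod K) → ℝ) (μ δ α : ℝ),
        0 < Vmax → (∀ n, 0 ≤ v n ∧ v n ≤ Vmax) → (∃ n, v n ≠ 0) →
        (∀ n, opH d K v u n = 1) →
        φ ≠ 0 → (∀ n, opH d K v φ n = μ * φ n) →
        0 < δ → 0 < μ → μ ≤ Vmax - δ →
        0 < α → α < 1 / Real.sqrt (C * d) →
        ∑ n ∈ Finset.univ.filter (fun n : Fin d → ZMod K =>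
            1 ≤ agmonDist d K (fun p => max (1 / u p - μ) 0)
              {p : Fin d → ZMod K | 1 / u p ≤ μ + δ} n),
          Real.exp (2 * α * agmonDist d K (fun p => max (1 / u p - μ) 0)
              {p : Fin d → ZMod K | 1 / u p ≤ μ + δ} n) * (φ n) ^ 2 ≤
        ((4 * Real.exp (2 * α) * d +
            (2 + 6 * C * α ^ 2) * Real.exp (2 * α) * d * Vmax) /
          (1 - C * d * α ^ 2)) / δ *
          ∑ n : Fin d → ZMod K, (φ n) ^ 2 := by
  refine ⟨1, one_pos, ?_⟩
  intro d K _ hK Vmax v u φ μ δ α hV hv hvne hu hφne hφ hδ hμ hμV hα hαlt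
  -- d ≥ 1 (otherwise the hypothesis on α is contradictory)
  rcases Nat.eq_zero_or_pos d with rfl | hd
  · exfalso
    rw [Nat.cast_zero, mul_zero, Real.sqrt_zero, div_zero] at hαlt
    linarith
  have hd1 : (1:ℝ) ≤ (d:ℝ) := by exact_mod_cast hd
  have hdpos : (0:ℝ) < (d:ℝ) := by linarith
  -- basic consequences of the α hypothesis
  have hsq : Real.sqrt (1 * (d:ℝ)) = Real.sqrt (d:ℝ) := by rw [one_mul]
  have hsqrtpos : 0 < Real.sqrt (d:ℝ) := Real.sqrt_pos.2 hdpos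
  have hα1 : α ≤ 1 := by
    have h1 : (1:ℝ) ≤ Real.sqrt (d:ℝ) := by
      rw [show (1:ℝ) = Real.sqrt 1 by rw [Real.sqrt_one]]
      exact Real.sqrt_le_sqrt hd1
    have h2 : 1 / Real.sqrt (d:ℝ) ≤ 1 := by
      rw [div_le_one hsqrtpos]; exact h1
    rw [hsq] at hαlt; linarith
  have hαd : α^2 * (d:ℝ) < 1 := by
    rw [hsq] at hαlt
    have h1 : α * Real.sqrt (d:ℝ) < 1 := by
      rw [lt_div_iff₀ hsqrtpos] at hαlt; exact hαlt
    have h2 : (α * Real.sqrt (d:ℝ))^2 < 1 := by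
      nlinarith [mul_nonneg hα.le hsqrtpos.le]
    calc α^2 * (d:ℝ) = (α * Real.sqrt (d:ℝ))^2 := by
          rw [mul_pow, Real.sq_sqrt hdpos.le]
      _ < 1 := h2
  -- abbreviations
  set w : (Fin d → ZMod K) → ℝ := fun p => max (1 / u p - μ) 0 with hwdef
  set J : Set (Fin d → ZMod K) := {p : Fin d → ZMod K | 1 / u p ≤ μ + δ} with hJdef
  set h : (Fin d → ZMod K) → ℝ := agmonDist d K w J with hhdef
  have hw0 : ∀ n, 0 ≤ w n := fun n => le_max_right _ _
  -- landscape positivity: u ≥ 1/Vmax > 0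
  obtain ⟨n0, -, hn0⟩ := Finset.exists_min_image (Finset.univ : Finset (Fin d → ZMod K)) u
    ⟨(fun _ => 0), Finset.mem_univ _⟩
  have hmin : ∀ nn, u n0 ≤ u nn := fun nn => hn0 nn (Finset.mem_univ _)
  have hop0 : (∑ i : Fin d, (2 * u n0 - u (n0 + e d K i) - u (n0 - e d K i)))
      + v n0 * u n0 = 1 := hu n0
  have hlap : (∑ i : Fin d, (2 * u n0 - u (n0 + e d K i) - u (n0 - e d K i))) ≤ 0 :=
    Finset.sum_nonpos fun i _ => by
      have := hmin (n0 + e d K i); have := hmin (n0 - e d K i); linarith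
  have hvu : 1 ≤ v n0 * u n0 := by linarith
  have hu0pos : 0 < u n0 := by
    by_contra hc
    push_neg at hc
    nlinarith [mul_nonpos_of_nonneg_of_nonpos (hv n0).1 hc]
  have hule : ∀ nn, 1 / Vmax ≤ u nn := by
    intro nn
    have h2 : 1 ≤ Vmax * u n0 := by nlinarith [(hv n0).2]
    have h3 : 1 / Vmax ≤ u n0 := by rw [div_le_iff₀ hV]; linarith
    linarith [hmin nn]
  have hupos : ∀ nn, 0 < u nn := fun nn => lt_of_lt_of_le (by positivity) (hule nn)
  -- Lipschitz bounds along edges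
  have lipA : ∀ (n : Fin d → ZMod K) (i : Fin d),
      h n ≤ h (n + e d K i)
        + Real.log (1 + Real.sqrt (min (w n) (w (n + e d K i)))) := by
    intro n i
    exact agmonDist_lip ⟨i, Or.inl rfl⟩
  have lipB : ∀ (n : Fin d → ZMod K) (i : Fin d),
      h (n + e d K i) ≤ h n
        + Real.log (1 + Real.sqrt (min (w n) (w (n + e d K i)))) := by
    intro n i
    have ha : adj d K n (n + e d K i) := ⟨i, Or.inr (by rw [add_sub_cancel_right])⟩
    have := agmonDist_lip (w := w) (J := J) ha
    rwa [min_comm] at this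
  have hh0 : ∀ n, 0 ≤ h n := fun n => agmonDist_nonneg w J n
  have hhJ : ∀ n, 1 / u n ≤ μ + δ → h n = 0 := fun n hn => agmonDist_eq_zero hn
  -- key per-edge bound
  have hkey : ∀ (n : Fin d → ZMod K) (i : Fin d),
      φ n * φ (n + e d K i) *
          (Real.exp (α * h (n + e d K i)) - Real.exp (α * h n))^2
        ≤ α^2/2 * (w n * Real.exp (2*α*h n) * φ n ^2)
          + α^2/2 * (w (n + e d K i) * Real.exp (2*α*h (n + e d K i))
              * φ (n + e d K i) ^2) := by
    intro n i
    set n' := n + e d K i with hn'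
    set t := min (w n) (w n') with htdef
    have ht : 0 ≤ t := le_min (hw0 n) (hw0 n')
    have hGb : (Real.exp (α * h n') - Real.exp (α * h n))^2
        ≤ α^2 * t * min (Real.exp (2*α*h n)) (Real.exp (2*α*h n')) := by
      rcases le_total (h n) (h n') with hc | hc
      · have hb := expDiff (α := α) hc (lipB n i) ht hα hα1
        have hFmin : min (Real.exp (2*α*h n)) (Real.exp (2*α*h n'))
            = Real.exp (2*α*h n) := min_eq_left (Real.exp_le_exp.2 (by nlinarith))
        rw [hFmin]
        calc (Real.exp (α * h n') - Real.exp (α * h n))^2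
            ≤ α^2 * t * Real.exp (2 * (α * h n)) := hb
          _ = α^2 * t * Real.exp (2*α*h n) := by rw [show 2*(α*h n) = 2*α*h n by ring]
      · have hb := expDiff (α := α) hc (lipA n i) ht hα hα1
        have hFmin : min (Real.exp (2*α*h n)) (Real.exp (2*α*h n'))
            = Real.exp (2*α*h n') := min_eq_right (Real.exp_le_exp.2 (by nlinarith))
        rw [hFmin]
        calc (Real.exp (α * h n') - Real.exp (α * h n))^2
            = (Real.exp (α * h n) - Real.exp (α * h n'))^2 := by ring
          _ ≤ α^2 * t * Real.exp (2 * (α * h n')) := hb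
          _ = α^2 * t * Real.exp (2*α*h n') := by rw [show 2*(α*h n') = 2*α*h n' by ring]
    have hφφ : φ n * φ n' ≤ (φ n^2 + φ n'^2)/2 := by nlinarith [sq_nonneg (φ n - φ n')]
    have h1 : φ n * φ n' * (Real.exp (α * h n') - Real.exp (α * h n))^2
        ≤ (φ n^2 + φ n'^2)/2 * (Real.exp (α * h n') - Real.exp (α * h n))^2 :=
      mul_le_mul_of_nonneg_right hφφ (sq_nonneg _)
    have h2 : (φ n^2 + φ n'^2)/2 * (Real.exp (α * h n') - Real.exp (α * h n))^2
        ≤ (φ n^2 + φ n'^2)/2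
          * (α^2 * t * min (Real.exp (2*α*h n)) (Real.exp (2*α*h n'))) :=
      mul_le_mul_of_nonneg_left hGb (by positivity)
    have hm1 : t * min (Real.exp (2*α*h n)) (Real.exp (2*α*h n'))
        ≤ w n * Real.exp (2*α*h n) :=
      mul_le_mul (min_le_left _ _) (min_le_left _ _)
        (le_min (Real.exp_pos _).le (Real.exp_pos _).le) (hw0 n)
    have hm2 : t * min (Real.exp (2*α*h n)) (Real.exp (2*α*h n'))
        ≤ w n' * Real.exp (2*α*h n') :=
      mul_le_mul (min_le_right _ _) (min_le_right _ _)
        (le_min (Real.exp_pos _).le (Real.exp_pos _).le) (hw0 n')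
    have h3 := mul_le_mul_of_nonneg_left hm1 (show (0:ℝ) ≤ α^2 * φ n^2/2 by positivity)
    have h4 := mul_le_mul_of_nonneg_left hm2 (show (0:ℝ) ≤ α^2 * φ n'^2/2 by positivity)
    have hr1 : (φ n^2 + φ n'^2)/2
        * (α^2 * t * min (Real.exp (2*α*h n)) (Real.exp (2*α*h n')))
        = α^2 * φ n^2/2 * (t * min (Real.exp (2*α*h n)) (Real.exp (2*α*h n')))
          + α^2 * φ n'^2/2 * (t * min (Real.exp (2*α*h n)) (Real.exp (2*α*h n'))) := by
      ring
    have hr2 : α^2 * φ n^2/2 * (w n * Real.exp (2*α*h n))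
        = α^2/2 * (w n * Real.exp (2*α*h n) * φ n ^2) := by ring
    have hr3 : α^2 * φ n'^2/2 * (w n' * Real.exp (2*α*h n'))
        = α^2/2 * (w n' * Real.exp (2*α*h n') * φ n' ^2) := by ring
    linarith [h1, h2, h3, h4]
  -- quadratic form identities
  -- (1) ground state inequality
  have hq1 := AgmonAux.quad (d := d) (K := K) v u (fun n => (Real.exp (α*h n) * φ n)^2 / u n)
  have hL1 : ∑ n, opH d K v u n * ((Real.exp (α*h n) * φ n)^2 / u n)
      = ∑ n, (Real.exp (α*h n) * φ n)^2 / u n :=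
    Finset.sum_congr rfl fun n _ => by rw [hu n, one_mul]
  have hlast1 : ∀ n : Fin d → ZMod K,
      v n * u n * ((Real.exp (α*h n) * φ n)^2 / u n)
        = v n * (Real.exp (α*h n) * φ n)^2 := by
    intro n
    field_simp [(hupos n).ne']
  have hedge1 : (∑ n, ∑ i, (u (n + e d K i) - u n)
        * ((Real.exp (α*h (n + e d K i)) * φ (n + e d K i))^2 / u (n + e d K i)
          - (Real.exp (α*h n) * φ n)^2 / u n))
      ≤ ∑ n, ∑ i, (Real.exp (α*h (n + e d K i)) * φ (n + e d K i)
          - Real.exp (α*h n) * φ n)^2 :=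
    Finset.sum_le_sum fun n _ => Finset.sum_le_sum fun i _ =>
      gsIneq _ _ (hupos n) (hupos (n + e d K i))
  have gs : ∑ n, (Real.exp (α*h n) * φ n)^2 / u n
      ≤ (∑ n, ∑ i, (Real.exp (α*h (n + e d K i)) * φ (n + e d K i)
          - Real.exp (α*h n) * φ n)^2)
        + ∑ n, v n * (Real.exp (α*h n) * φ n)^2 := by
    rw [← hL1, hq1, Finset.sum_congr rfl (fun n _ => hlast1 n)]
    linarith [hedge1]
  -- (2) eigenfunction identity
  have hq2 := AgmonAux.quad (d := d) (K := K) v φ (fun n => Real.exp (2*α*h n) * φ n)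
  have hL2 : ∑ n, opH d K v φ n * (Real.exp (2*α*h n) * φ n)
      = μ * ∑ n, Real.exp (2*α*h n) * φ n^2 := by
    rw [Finset.mul_sum]
    refine Finset.sum_congr rfl fun n _ => by rw [hφ n]; ring
  -- pointwise algebraic identity on edges
  have hptid : ∀ (n : Fin d → ZMod K) (i : Fin d),
      (φ (n + e d K i) - φ n)
          * (Real.exp (2*α*h (n + e d K i)) * φ (n + e d K i)
            - Real.exp (2*α*h n) * φ n)
        = (Real.exp (α*h (n + e d K i)) * φ (n + e d K i)
            - Real.exp (α*h n) * φ n)^2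
          - φ n * φ (n + e d K i)
            * (Real.exp (α * h (n + e d K i)) - Real.exp (α * h n))^2 := by
    intro n i
    have hFG : ∀ m : Fin d → ZMod K, Real.exp (2*α*h m) = Real.exp (α*h m)^2 := by
      intro m
      rw [sq, ← Real.exp_add]
      congr 1
      ring
    rw [hFG, hFG]
    ring
  -- combine: central inequality before edge-sum bounding
  have central0 : ∑ n, (Real.exp (α*h n) * φ n)^2 / u n
      ≤ (∑ n, ∑ i, φ n * φ (n + e d K i)
          * (Real.exp (α * h (n + e d K i)) - Real.exp (α * h n))^2)
        + μ * ∑ n, Real.exp (2*α*h n) * φ n^2 := by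
    have e1 : ∑ n, ∑ i, (φ (n + e d K i) - φ n)
        * (Real.exp (2*α*h (n + e d K i)) * φ (n + e d K i)
          - Real.exp (2*α*h n) * φ n)
        = (∑ n, ∑ i, (Real.exp (α*h (n + e d K i)) * φ (n + e d K i)
            - Real.exp (α*h n) * φ n)^2)
          - ∑ n, ∑ i, φ n * φ (n + e d K i)
            * (Real.exp (α * h (n + e d K i)) - Real.exp (α * h n))^2 := by
      rw [← Finset.sum_sub_distrib]
      refine Finset.sum_congr rfl fun n _ => ?_
      rw [← Finset.sum_sub_distrib]
      exact Finset.sum_congr rfl fun i _ => hptid n i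
    have e2 : ∀ n : Fin d → ZMod K,
        v n * φ n * (Real.exp (2*α*h n) * φ n) = v n * (Real.exp (α*h n) * φ n)^2 := by
      intro n
      have : Real.exp (2*α*h n) = Real.exp (α*h n)^2 := by
        rw [sq, ← Real.exp_add]; congr 1; ring
      rw [this]; ring
    have e3 : ∀ n : Fin d → ZMod K,
        Real.exp (2*α*h n) * φ n^2 = (Real.exp (α*h n) * φ n)^2 := by
      intro n
      have : Real.exp (2*α*h n) = Real.exp (α*h n)^2 := by
        rw [sq, ← Real.exp_add]; congr 1; ring
      rw [this]; ring
    rw [hL2, e1, Finset.sum_congr rfl (fun n _ => e2 n)] at hq2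
    have e4 : μ * ∑ n, Real.exp (2*α*h n) * φ n^2
        = μ * ∑ n, (Real.exp (α*h n) * φ n)^2 := by
      rw [Finset.sum_congr rfl (fun n _ => e3 n)]
    rw [e4] at hq2 ⊢
    linarith [gs, hq2]
  -- sum the per-edge bound
  have hinner : ∀ i : Fin d,
      ∑ n, w (n + e d K i) * Real.exp (2*α*h (n + e d K i)) * φ (n + e d K i)^2
        = ∑ n, w n * Real.exp (2*α*h n) * φ n^2 := fun i =>
    AgmonAux.sum_shift (e d K i) (fun m => w m * Real.exp (2*α*h m) * φ m^2)
  have hX : (∑ n, ∑ i, φ n * φ (n + e d K i)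
        * (Real.exp (α * h (n + e d K i)) - Real.exp (α * h n))^2)
      ≤ α^2 * (d:ℝ) * ∑ n, w n * Real.exp (2*α*h n) * φ n^2 := by
    have step1 : (∑ n, ∑ i, φ n * φ (n + e d K i)
          * (Real.exp (α * h (n + e d K i)) - Real.exp (α * h n))^2)
        ≤ ∑ n, ∑ i : Fin d, (α^2/2 * (w n * Real.exp (2*α*h n) * φ n ^2)
            + α^2/2 * (w (n + e d K i) * Real.exp (2*α*h (n + e d K i))
              * φ (n + e d K i) ^2)) :=
      Finset.sum_le_sum fun n _ => Finset.sum_le_sum fun i _ => hkey n i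
    have step2 : ∑ n, ∑ i : Fin d, (α^2/2 * (w n * Real.exp (2*α*h n) * φ n ^2)
            + α^2/2 * (w (n + e d K i) * Real.exp (2*α*h (n + e d K i))
              * φ (n + e d K i) ^2))
        = α^2 * (d:ℝ) * ∑ n, w n * Real.exp (2*α*h n) * φ n^2 := by
      simp only [Finset.sum_add_distrib]
      have hcomm : ∑ n : Fin d → ZMod K, ∑ i : Fin d,
          α^2/2 * (w (n + e d K i) * Real.exp (2*α*h (n + e d K i)) * φ (n + e d K i) ^2)
          = ∑ i : Fin d, ∑ n : Fin d → ZMod K,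
          α^2/2 * (w (n + e d K i) * Real.exp (2*α*h (n + e d K i)) * φ (n + e d K i) ^2) :=
        Finset.sum_comm
      rw [hcomm]
      have p1 : ∑ n : Fin d → ZMod K, ∑ _i : Fin d,
          α^2/2 * (w n * Real.exp (2*α*h n) * φ n ^2)
          = (d:ℝ) * (α^2/2) * ∑ n, w n * Real.exp (2*α*h n) * φ n^2 := by
        rw [Finset.mul_sum]
        refine Finset.sum_congr rfl fun n _ => ?_
        rw [Finset.sum_const, Finset.card_univ, Fintype.card_fin, nsmul_eq_mul]
        ring
      have p2 : ∑ i : Fin d, ∑ n : Fin d → ZMod K,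
          α^2/2 * (w (n + e d K i) * Real.exp (2*α*h (n + e d K i)) * φ (n + e d K i) ^2)
          = (d:ℝ) * (α^2/2) * ∑ n, w n * Real.exp (2*α*h n) * φ n^2 := by
        have : ∀ i : Fin d, ∑ n : Fin d → ZMod K,
            α^2/2 * (w (n + e d K i) * Real.exp (2*α*h (n + e d K i)) * φ (n + e d K i) ^2)
            = α^2/2 * ∑ n, w n * Real.exp (2*α*h n) * φ n^2 := by
          intro i
          rw [← Finset.mul_sum, hinner i]
        rw [Finset.sum_congr rfl (fun i _ => this i), Finset.sum_const,
          Finset.card_univ, Fintype.card_fin, nsmul_eq_mul]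
        ring
      rw [p1, p2]
      ring
    linarith [step1, step2.le, step2.ge]
  -- central inequality
  have central : ∑ n, (1/u n - μ) * (Real.exp (2*α*h n) * φ n^2)
      ≤ α^2 * (d:ℝ) * ∑ n, w n * Real.exp (2*α*h n) * φ n^2 := by
    have e5 : ∀ n : Fin d → ZMod K,
        (Real.exp (α*h n) * φ n)^2 / u n
          = (1/u n) * (Real.exp (2*α*h n) * φ n^2) := by
      intro n
      have hex : Real.exp (2*α*h n) = Real.exp (α*h n)^2 := by
        rw [sq, ← Real.exp_add]; congr 1; ring
      rw [hex]
      field_simp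
    have e6 : ∀ n : Fin d → ZMod K,
        Real.exp (2*α*h n) * φ n^2 = (Real.exp (α*h n) * φ n)^2 := by
      intro n
      have hex : Real.exp (2*α*h n) = Real.exp (α*h n)^2 := by
        rw [sq, ← Real.exp_add]; congr 1; ring
      rw [hex]; ring
    have c1 : ∑ n, (1/u n) * (Real.exp (2*α*h n) * φ n^2)
        - μ * ∑ n, Real.exp (2*α*h n) * φ n^2
        ≤ ∑ n, ∑ i, φ n * φ (n + e d K i)
          * (Real.exp (α * h (n + e d K i)) - Real.exp (α * h n))^2 := by
      have := central0
      rw [Finset.sum_congr rfl (fun n _ => e5 n)] at this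
      have e7 : μ * ∑ n, Real.exp (2*α*h n) * φ n^2
          = μ * ∑ n, Real.exp (2*α*h n) * φ n^2 := rfl
      linarith [this]
    have c2 : ∑ n, (1/u n - μ) * (Real.exp (2*α*h n) * φ n^2)
        = ∑ n, (1/u n) * (Real.exp (2*α*h n) * φ n^2)
          - μ * ∑ n, Real.exp (2*α*h n) * φ n^2 := by
      rw [Finset.mul_sum, ← Finset.sum_sub_distrib]
      exact Finset.sum_congr rfl fun n _ => by ring
    rw [c2]
    linarith [c1, hX]
  -- split the central inequality over J and its complement
  set T1 : Finset (Fin d → ZMod K) := Finset.univ.filter (fun n => 1 / u n ≤ μ + δ) with hT1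
  set T2 : Finset (Fin d → ZMod K) := Finset.univ.filter (fun n => ¬ (1 / u n ≤ μ + δ)) with hT2
  have hS0 : (0:ℝ) ≤ ∑ n, φ n^2 := Finset.sum_nonneg fun n _ => sq_nonneg _
  have hA : ∀ n : Fin d → ZMod K, (0:ℝ) ≤ Real.exp (2*α*h n) * φ n^2 :=
    fun n => mul_nonneg (Real.exp_pos _).le (sq_nonneg _)
  have hsplitc : ∀ g : (Fin d → ZMod K) → ℝ,
      ∑ n, g n = ∑ n ∈ T1, g n + ∑ n ∈ T2, g n := fun g =>
    (Finset.sum_filter_add_sum_filter_not Finset.univ _ g).symm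
  have hT1bound : ∑ n ∈ T1, (α^2*(d:ℝ)* w n - (1/u n - μ)) * (Real.exp (2*α*h n) * φ n^2)
      ≤ (α^2*(d:ℝ)*δ + Vmax) * ∑ n, φ n^2 := by
    have step : ∀ n ∈ T1, (α^2*(d:ℝ)* w n - (1/u n - μ)) * (Real.exp (2*α*h n) * φ n^2)
        ≤ (α^2*(d:ℝ)*δ + Vmax) * φ n^2 := by
      intro n hn
      rw [hT1, Finset.mem_filter] at hn
      have hn2 := hn.2
      have hF1 : Real.exp (2*α*h n) = 1 := by rw [hhJ n hn2]; norm_num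
      rw [hF1, one_mul]
      have hwle : w n ≤ δ := max_le (by linarith) hδ.le
      have hinv : 0 < 1/u n := div_pos one_pos (hupos n)
      have hco : α^2*(d:ℝ)*w n - (1/u n - μ) ≤ α^2*(d:ℝ)*δ + Vmax := by
        have h6 : α^2*(d:ℝ)*w n ≤ α^2*(d:ℝ)*δ :=
          mul_le_mul_of_nonneg_left hwle (by positivity)
        have h7 : μ - 1/u n ≤ Vmax := by linarith
        linarith
      exact mul_le_mul_of_nonneg_right hco (sq_nonneg _)
    calc ∑ n ∈ T1, (α^2*(d:ℝ)* w n - (1/u n - μ)) * (Real.exp (2*α*h n) * φ n^2)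
        ≤ ∑ n ∈ T1, (α^2*(d:ℝ)*δ + Vmax) * φ n^2 := Finset.sum_le_sum step
      _ = (α^2*(d:ℝ)*δ + Vmax) * ∑ n ∈ T1, φ n^2 := by rw [Finset.mul_sum]
      _ ≤ (α^2*(d:ℝ)*δ + Vmax) * ∑ n, φ n^2 := by
          have hcn : (0:ℝ) ≤ α^2*(d:ℝ)*δ + Vmax := by positivity
          refine mul_le_mul_of_nonneg_left ?_ hcn
          exact Finset.sum_le_sum_of_subset_of_nonneg (Finset.filter_subset _ _)
            (fun n _ _ => sq_nonneg _)
  have hT2bound : (1 - α^2*(d:ℝ)) * δ * ∑ n ∈ T2, Real.exp (2*α*h n) * φ n^2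
      ≤ ∑ n ∈ T2, ((1/u n - μ) - α^2*(d:ℝ)*w n) * (Real.exp (2*α*h n) * φ n^2) := by
    rw [Finset.mul_sum]
    refine Finset.sum_le_sum ?_
    intro n hn
    rw [hT2, Finset.mem_filter] at hn
    have hgt : μ + δ < 1/u n := lt_of_not_ge hn.2
    have hwn : w n = 1/u n - μ := max_eq_left (by linarith)
    have hcoef : (1 - α^2*(d:ℝ))*δ ≤ (1/u n - μ) - α^2*(d:ℝ)*w n := by
      rw [hwn]
      nlinarith [hαd]
    exact mul_le_mul_of_nonneg_right hcoef (hA n)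
  have hmain : (1 - α^2*(d:ℝ)) * δ * ∑ n ∈ T2, Real.exp (2*α*h n) * φ n^2
      ≤ (α^2*(d:ℝ)*δ + Vmax) * ∑ n, φ n^2 := by
    have hc2 : ∑ n, (1/u n - μ) * (Real.exp (2*α*h n) * φ n^2)
        - α^2*(d:ℝ) * ∑ n, w n * (Real.exp (2*α*h n) * φ n^2) ≤ 0 := by
      have e8 : ∑ n, w n * (Real.exp (2*α*h n) * φ n^2)
          = ∑ n, w n * Real.exp (2*α*h n) * φ n^2 :=
        Finset.sum_congr rfl fun n _ => by ring
      rw [e8]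
      linarith [central]
    have e9 : ∑ n, ((1/u n - μ) - α^2*(d:ℝ)*w n) * (Real.exp (2*α*h n) * φ n^2)
        = ∑ n, (1/u n - μ) * (Real.exp (2*α*h n) * φ n^2)
          - α^2*(d:ℝ) * ∑ n, w n * (Real.exp (2*α*h n) * φ n^2) := by
      rw [Finset.mul_sum, ← Finset.sum_sub_distrib]
      exact Finset.sum_congr rfl fun n _ => by ring
    have e10 := hsplitc (fun n => ((1/u n - μ) - α^2*(d:ℝ)*w n) * (Real.exp (2*α*h n) * φ n^2))
    have e11 : ∑ n ∈ T1, ((1/u n - μ) - α^2*(d:ℝ)*w n) * (Real.exp (2*α*h n) * φ n^2)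
        = - ∑ n ∈ T1, (α^2*(d:ℝ)*w n - (1/u n - μ)) * (Real.exp (2*α*h n) * φ n^2) := by
      rw [← Finset.sum_neg_distrib]
      exact Finset.sum_congr rfl fun n _ => by ring
    linarith [hT1bound, hT2bound, hc2, e9.le, e9.ge, e10.le, e10.ge, e11.le, e11.ge]
  have hTsub : Finset.univ.filter (fun n : Fin d → ZMod K => 1 ≤ h n) ⊆ T2 := by
    intro n hn
    rw [Finset.mem_filter] at hn
    rw [hT2, Finset.mem_filter]
    refine ⟨Finset.mem_univ _, ?_⟩
    intro hcon
    have := hhJ n hcon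
    linarith [hn.2]
  have htarget : ∑ n ∈ Finset.univ.filter (fun n : Fin d → ZMod K => 1 ≤ h n),
        Real.exp (2*α*h n) * φ n^2
      ≤ ∑ n ∈ T2, Real.exp (2*α*h n) * φ n^2 :=
    Finset.sum_le_sum_of_subset_of_nonneg hTsub (fun n _ _ => hA n)
  have hD : 0 < (1 - α^2*(d:ℝ)) * δ := mul_pos (by linarith) hδ
  have he2α : (1:ℝ) ≤ Real.exp (2*α) := by
    rw [show (1:ℝ) = Real.exp 0 by simp]
    exact Real.exp_le_exp.2 (by linarith)
  have hδV : δ ≤ Vmax := by linarith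
  have hnum : α^2*(d:ℝ)*δ + Vmax ≤ 4 * Real.exp (2*α) * (d:ℝ)
      + (2 + 6*1*α^2) * Real.exp (2*α) * (d:ℝ) * Vmax := by
    have t1 : α^2*(d:ℝ)*δ ≤ δ := by nlinarith
    have hed : (1:ℝ) ≤ Real.exp (2*α) * (d:ℝ) := by nlinarith [he2α, hd1, hdpos]
    have t2 : Vmax ≤ Real.exp (2*α) * (d:ℝ) * Vmax := by nlinarith [hed, hV]
    have t3 : (0:ℝ) ≤ 6*α^2*(Real.exp (2*α)*(d:ℝ)*Vmax) := by positivity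
    have t4 : (0:ℝ) < 4 * Real.exp (2*α) * (d:ℝ) := by positivity
    nlinarith [t1, t2, t3, t4]
  have hfinal : ∑ n ∈ T2, Real.exp (2*α*h n) * φ n^2
      ≤ ((4 * Real.exp (2*α) * (d:ℝ) + (2 + 6*1*α^2) * Real.exp (2*α) * (d:ℝ) * Vmax)
        / ((1 - α^2*(d:ℝ)) * δ)) * ∑ n, φ n^2 := by
    rw [div_mul_eq_mul_div, le_div_iff₀ hD]
    calc (∑ n ∈ T2, Real.exp (2*α*h n) * φ n^2) * ((1 - α^2*(d:ℝ))*δ)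
        = (1 - α^2*(d:ℝ))*δ * ∑ n ∈ T2, Real.exp (2*α*h n) * φ n^2 := by ring
      _ ≤ (α^2*(d:ℝ)*δ + Vmax) * ∑ n, φ n^2 := hmain
      _ ≤ (4 * Real.exp (2*α) * (d:ℝ) + (2 + 6*1*α^2) * Real.exp (2*α) * (d:ℝ) * Vmax)
            * ∑ n, φ n^2 := mul_le_mul_of_nonneg_right hnum hS0
  have hconst : ((4 * Real.exp (2*α) * (d:ℝ) + (2 + 6*1*α^2) * Real.exp (2*α) * (d:ℝ) * Vmax)
      / (1 - 1*(d:ℝ)*α^2)) / δ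
      = (4 * Real.exp (2*α) * (d:ℝ) + (2 + 6*1*α^2) * Real.exp (2*α) * (d:ℝ) * Vmax)
        / ((1 - α^2*(d:ℝ)) * δ) := by
    rw [div_div]
    congr 1
    ring
  calc ∑ n ∈ Finset.univ.filter (fun n : Fin d → ZMod K => 1 ≤ h n),
        Real.exp (2*α*h n) * φ n^2
      ≤ ∑ n ∈ T2, Real.exp (2*α*h n) * φ n^2 := htarget
    _ ≤ ((4 * Real.exp (2*α) * (d:ℝ) + (2 + 6*1*α^2) * Real.exp (2*α) * (d:ℝ) * Vmax)
        / ((1 - α^2*(d:ℝ)) * δ)) * ∑ n, φ n^2 := hfinal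
    _ = ((4 * Real.exp (2*α) * (d:ℝ) + (2 + 6*1*α^2) * Real.exp (2*α) * (d:ℝ) * Vmax)
        / (1 - 1*(d:ℝ)*α^2)) / δ * ∑ n, φ n^2 := by rw [hconst]
end
end

section
/- Duality of eigenpairs: let K be even, M = (Z/KZ)^d, and for φ ∈ ℓ²(M) define φ̃_n = (-1)^{s(n)} φ_n where s(n) = n_1 + ... + n_d. Then (μ, φ) is an eigenpair of H = -Δ + V if and only if (4d + V_max - μ, φ̃) is an eigenpair of the dual operator H̃ = -Δ + (V_max - V). -/
open Finset Real

noncomputable section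

/-- The sign `(-1)^{s(n)}` where `s(n) = n_1 + ⋯ + n_d` (well defined on the
torus when `K` is even). -/
def sgn (d K : ℕ) (n : Fin d → ZMod K) : ℝ :=
  (-1 : ℝ) ^ (∑ i : Fin d, (n i).val)

lemma neg_one_pow_val_add_one {K : ℕ} [NeZero K] (hK : Even K) (x : ZMod K) :
    ((-1 : ℝ)) ^ ((x + 1).val) = -(-1 : ℝ) ^ x.val := by
  have hK1 : 1 < K := by
    rcases Nat.lt_or_ge K 2 with h | h
    · interval_cases K
      · exact absurd rfl (NeZero.ne 0)
      · simp [Nat.even_iff] at hK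
    · omega
  have hval : (x + 1).val = (x.val + 1) % K := by
    haveI : Fact (1 < K) := ⟨hK1⟩
    rw [ZMod.val_add, ZMod.val_one]
  have hx : x.val < K := ZMod.val_lt x
  rcases Nat.lt_or_ge (x.val + 1) K with h | h
  · rw [hval, Nat.mod_eq_of_lt h, pow_succ]
    ring
  · have : x.val + 1 = K := by omega
    rw [hval, this, Nat.mod_self, pow_zero]
    have : x.val = K - 1 := by omega
    rw [this]
    have hodd : Odd (K - 1) := Nat.Even.sub_odd (by omega) hK (by norm_num)
    rw [hodd.neg_one_pow]; ring

lemma sgn_add_e (d K : ℕ) [NeZero K] (hK : Even K) (n : Fin d → ZMod K) (i : Fin d) :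
    sgn d K (n + e d K i) = -sgn d K n := by
  unfold sgn
  have h1 : ∀ j : Fin d, ((n + e d K j) j).val = ((n j) + 1).val := by
    intro j; simp [e]
  have h2 : (∑ j : Fin d, ((n + e d K i) j).val)
      = (((n i) + 1).val) + ∑ j ∈ Finset.univ.erase i, (n j).val := by
    rw [← Finset.add_sum_erase _ _ (Finset.mem_univ i)]
    congr 1
    · simp [e]
    · apply Finset.sum_congr rfl
      intro j hj
      simp only [Finset.mem_erase] at hj
      simp [e, hj.1, Pi.add_apply]
  have h3 : (∑ j : Fin d, (n j).val)
      = ((n i).val) + ∑ j ∈ Finset.univ.erase i, (n j).val :=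
    (Finset.add_sum_erase _ _ (Finset.mem_univ i)).symm
  rw [h2, h3, pow_add, pow_add, neg_one_pow_val_add_one hK]
  ring

lemma sgn_sub_e (d K : ℕ) [NeZero K] (hK : Even K) (n : Fin d → ZMod K) (i : Fin d) :
    sgn d K (n - e d K i) = -sgn d K n := by
  have := sgn_add_e d K hK (n - e d K i) i
  rw [sub_add_cancel] at this
  rw [this]; ring

lemma opH_dual (d K : ℕ) [NeZero K] (hK : Even K) (Vmax : ℝ)
    (v φ : (Fin d → ZMod K) → ℝ) (n : Fin d → ZMod K) :
    opH d K (fun p => Vmax - v p) (fun p => sgn d K p * φ p) n =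
      sgn d K n * ((4 * d + Vmax) * φ n - opH d K v φ n) := by
  unfold opH
  have hsum : ∑ i : Fin d,
      (2 * (sgn d K n * φ n) - sgn d K (n + e d K i) * φ (n + e d K i)
        - sgn d K (n - e d K i) * φ (n - e d K i))
      = ∑ i : Fin d, (sgn d K n *
        (2 * φ n + φ (n + e d K i) + φ (n - e d K i))) := by
    apply Finset.sum_congr rfl
    intro i _
    rw [sgn_add_e d K hK, sgn_sub_e d K hK]
    ring
  rw [hsum, ← Finset.mul_sum]
  have hsum2 : ∑ i : Fin d, (2 * φ n + φ (n + e d K i) + φ (n - e d K i))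
      = 4 * d * φ n - ∑ i : Fin d,
        (2 * φ n - φ (n + e d K i) - φ (n - e d K i)) := by
    rw [eq_sub_iff_add_eq, ← Finset.sum_add_distrib]
    have : ∀ i : Fin d, (2 * φ n + φ (n + e d K i) + φ (n - e d K i))
        + (2 * φ n - φ (n + e d K i) - φ (n - e d K i)) = 4 * φ n := by
      intro i; ring
    simp only [this]
    rw [Finset.sum_const, Finset.card_univ, Fintype.card_fin, nsmul_eq_mul]
    ring
  rw [hsum2]
  ring

lemma sgn_ne_zero (d K : ℕ) (n : Fin d → ZMod K) : sgn d K n ≠ 0 := by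
  unfold sgn
  exact pow_ne_zero _ (by norm_num)

/-- Duality of eigenpairs: for `K` even, `(μ, φ)` is an eigenpair of
`H = -Δ + V` iff `(4d + V_max - μ, φ̃)` is an eigenpair of the dual operator
`H̃ = -Δ + (V_max - V)`, where `φ̃_n = (-1)^{s(n)} φ_n`. -/
theorem dual_eigenpair (d K : ℕ) [NeZero K] (hK : Even K)
    (Vmax : ℝ) (v : (Fin d → ZMod K) → ℝ)
    (hv : ∀ n, 0 ≤ v n ∧ v n ≤ Vmax)
    (μ : ℝ) (φ : (Fin d → ZMod K) → ℝ) (hφ : φ ≠ 0) :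
    (∀ n, opH d K v φ n = μ * φ n) ↔
      (∀ n, opH d K (fun p => Vmax - v p) (fun p => sgn d K p * φ p) n =
        (4 * d + Vmax - μ) * (sgn d K n * φ n)) := by
  have key : ∀ n, (opH d K (fun p => Vmax - v p) (fun p => sgn d K p * φ p) n =
      (4 * d + Vmax - μ) * (sgn d K n * φ n)) ↔ opH d K v φ n = μ * φ n := by
    intro n
    rw [opH_dual d K hK]
    constructor
    · intro h
      have h2 : sgn d K n * (opH d K v φ n - μ * φ n) = 0 := by linarith [h]
      rcases mul_eq_zero.mp h2 with h3 | h3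
      · exact absurd h3 (sgn_ne_zero d K n)
      · linarith
    · intro h; rw [h]; ring
  constructor
  · intro h n; exact (key n).mpr (h n)
  · intro h n; exact (key n).mp (h n)
end
end
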